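/- arXiv:0711.3759 — 2 statements merged into one kernel-verified Lean document; each statement's English description precedes it below -/
import Mathlib

section
/- (Proposition 2.3.) Fix t_0 ∈ ℂ, s ∈ {1,…,n} and an integer k ≥ 2. Assume that for every i ≠ s the row space of M^i_k(t_0) equals the row space of M^i_{k-1}(t_0) (i.e. Osc^k of C_i at the parameter-t_0 point coincides with Osc^{k−1}; this is the condition the paper derives from p_i ∈ Φ_k(C_i)). Then for all scalars u_i ∈ ℂ (i ≠ s), the row space of M^{X,s}_k(t_0, u) equals the direct sum ι_s(row space of M^s_k(t_0)) ⊕ ⨁_{i≠s} ι_i(row space of M^i_{k-1}(t_0)). -/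
open Matrix

/-- The `k`-th jet matrix `M^i_k(t)` of a parametrized curve. -/
noncomputable def curveJet (r : ℕ) (a : ℂ → Fin (r + 1) → ℂ) (k : ℕ) (t : ℂ) :
    Matrix (Fin (k + 1)) (Fin (r + 1)) ℂ :=
  Matrix.of fun l j => iteratedDeriv (l : ℕ) (fun s => a s j) t

/-- The `i`-th block inclusion `ι_i : ℂ^{r_i+1} → V`. -/
noncomputable def blockIncl {n : ℕ} (r : Fin n → ℕ) (i : Fin n)
    (v : Fin (r i + 1) → ℂ) : (Σ j : Fin n, Fin (r j + 1)) → ℂ :=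
  fun p => if h : p.1 = i then v (Fin.cast (by rw [h]) p.2) else 0

/-- The `k`-th jet matrix `M^{X,s}_k(t,u)` of the decomposable scroll. -/
noncomputable def scrollJet {n : ℕ} (r : Fin n → ℕ)
    (a : ∀ i : Fin n, ℂ → Fin (r i + 1) → ℂ) (k : ℕ) (s : Fin n) (t : ℂ)
    (u : Fin n → ℂ) :
    Matrix (Fin (k + 1) ⊕ ({i : Fin n // i ≠ s} × Fin k))
      (Σ j : Fin n, Fin (r j + 1)) ℂ :=
  Matrix.of fun row =>
    match row with
    | Sum.inl l =>
        blockIncl r s (curveJet (r s) (a s) k t l) +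
          ∑ i ∈ Finset.univ.filter (fun i => i ≠ s),
            u i • blockIncl r i (curveJet (r i) (a i) k t l)
    | Sum.inr q =>
        blockIncl r q.1.1 (curveJet (r q.1.1) (a q.1.1) k t q.2.castSucc)

/-- The row space of a matrix, i.e. the span of its rows. -/
noncomputable def rowSpace {m α : Type*} [Fintype m] (M : Matrix m α ℂ) : Submodule ℂ (α → ℂ) :=
  Submodule.span ℂ (Set.range fun i => M i)
/-- `blockIncl` as a linear map. -/
noncomputable def blockInclL {n : ℕ} (r : Fin n → ℕ) (i : Fin n) :
    (Fin (r i + 1) → ℂ) →ₗ[ℂ] ((Σ j : Fin n, Fin (r j + 1)) → ℂ) where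
  toFun := blockIncl r i
  map_add' v w := by funext p; by_cases h : p.1 = i <;> simp [blockIncl, h]
  map_smul' c v := by funext p; by_cases h : p.1 = i <;> simp [blockIncl, h]

lemma blockIncl_mem_span {n : ℕ} (r : Fin n → ℕ) (i : Fin n) {m : Type*} [Fintype m]
    (M : Matrix m (Fin (r i + 1)) ℂ) {x : Fin (r i + 1) → ℂ} (hx : x ∈ rowSpace M) :
    blockIncl r i x ∈ Submodule.span ℂ (Set.range fun l => blockIncl r i (M l)) := by
  have h2 : blockInclL r i x ∈ Submodule.map (blockInclL r i) (rowSpace M) := ⟨x, hx, rfl⟩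
  rwa [rowSpace, Submodule.map_span, ← Set.range_comp] at h2

lemma curveJet_row_cast {r : ℕ} (a : ℂ → Fin (r + 1) → ℂ) (k k' : ℕ) (t : ℂ)
    (l : Fin (k + 1)) (l' : Fin (k' + 1)) (h : (l : ℕ) = (l' : ℕ)) :
    curveJet r a k t l = curveJet r a k' t l' := by
  funext j; simp [curveJet, h]

/-- Proposition 2.3: if for every `i ≠ s` the `k`-th and `(k-1)`-th
osculating spaces of `C_i` at the parameter-`t0` point coincide, then for all
scalars `u`, the row space of `M^{X,s}_k(t0,u)` equals the (direct) sum of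
`ι_s(row space of M^s_k(t0))` and the `ι_i(row space of M^i_{k-1}(t0))`, `i ≠ s`. -/
theorem statement8 {n : ℕ} (hn : 2 ≤ n) (r : Fin n → ℕ) (hr : ∀ i, 1 ≤ r i)
    (a : ∀ i : Fin n, ℂ → Fin (r i + 1) → ℂ)
    (hent : ∀ i j, Differentiable ℂ fun t => a i t j)
    (hnd : ∀ i t, (curveJet (r i) (a i) 1 t).rank = 2)
    (t0 : ℂ) (s : Fin n) (k : ℕ) (hk : 2 ≤ k)
    (hosc : ∀ i, i ≠ s →
      rowSpace (curveJet (r i) (a i) k t0) =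
        rowSpace (curveJet (r i) (a i) (k - 1) t0))
    (u : Fin n → ℂ) :
    rowSpace (scrollJet r a k s t0 u) =
      Submodule.span ℂ
        ((Set.range fun l : Fin (k + 1) =>
            blockIncl r s (curveJet (r s) (a s) k t0 l)) ∪
          ⋃ i : {i : Fin n // i ≠ s},
            Set.range fun m : Fin (k - 1 + 1) =>
              blockIncl r i.1 (curveJet (r i.1) (a i.1) (k - 1) t0 m)) := by
  have hk1 : k - 1 + 1 = k := by omega
  have hgen : ∀ (i : Fin n) (hi : i ≠ s) (m : Fin (k - 1 + 1)),
      blockIncl r i (curveJet (r i) (a i) (k - 1) t0 m) ∈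
        rowSpace (scrollJet r a k s t0 u) := by
    intro i hi m
    have he : scrollJet r a k s t0 u (Sum.inr (⟨i, hi⟩, Fin.cast hk1 m)) =
        blockIncl r i (curveJet (r i) (a i) (k - 1) t0 m) := by
      show blockIncl r i (curveJet (r i) (a i) k t0 (Fin.cast hk1 m).castSucc) = _
      rw [curveJet_row_cast (a i) k (k - 1) t0 _ m (by simp)]
    rw [← he]
    exact Submodule.subset_span ⟨_, rfl⟩
  have hik : ∀ (i : Fin n), i ≠ s → ∀ l : Fin (k + 1),
      blockIncl r i (curveJet (r i) (a i) k t0 l) ∈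
        rowSpace (scrollJet r a k s t0 u) := by
    intro i hi l
    have h1 : curveJet (r i) (a i) k t0 l ∈ rowSpace (curveJet (r i) (a i) (k - 1) t0) := by
      rw [← hosc i hi]; exact Submodule.subset_span ⟨l, rfl⟩
    have h2 := blockIncl_mem_span r i _ h1
    refine Submodule.span_le.mpr ?_ h2
    rintro y ⟨m, rfl⟩
    exact hgen i hi m
  apply le_antisymm
  · rw [rowSpace]
    apply Submodule.span_le.mpr
    rintro x ⟨row, rfl⟩
    rcases row with l | ⟨i, m⟩
    · show blockIncl r s (curveJet (r s) (a s) k t0 l) +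
          ∑ i ∈ Finset.univ.filter (fun i => i ≠ s),
            u i • blockIncl r i (curveJet (r i) (a i) k t0 l) ∈ _
      apply Submodule.add_mem
      · exact Submodule.subset_span (Or.inl ⟨l, rfl⟩)
      · apply Submodule.sum_mem
        intro i hi
        have hi' : i ≠ s := (Finset.mem_filter.mp hi).2
        apply Submodule.smul_mem
        have h1 : curveJet (r i) (a i) k t0 l ∈
            rowSpace (curveJet (r i) (a i) (k - 1) t0) := by
          rw [← hosc i hi']; exact Submodule.subset_span ⟨l, rfl⟩
        have h2 := blockIncl_mem_span r i _ h1
        refine Submodule.span_le.mpr ?_ h2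
        rintro y ⟨m, rfl⟩
        exact Submodule.subset_span
          (Or.inr (Set.mem_iUnion.mpr ⟨⟨i, hi'⟩, ⟨m, rfl⟩⟩))
    · show blockIncl r i.1 (curveJet (r i.1) (a i.1) k t0 m.castSucc) ∈ _
      rw [curveJet_row_cast (a i.1) k (k - 1) t0 m.castSucc (Fin.cast hk1.symm m) (by simp)]
      exact Submodule.subset_span
        (Or.inr (Set.mem_iUnion.mpr ⟨i, ⟨Fin.cast hk1.symm m, rfl⟩⟩))
  · apply Submodule.span_le.mpr
    rintro x (⟨l, rfl⟩ | hx)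
    · have hrow : scrollJet r a k s t0 u (Sum.inl l) =
          blockIncl r s (curveJet (r s) (a s) k t0 l) +
            ∑ i ∈ Finset.univ.filter (fun i => i ≠ s),
              u i • blockIncl r i (curveJet (r i) (a i) k t0 l) := rfl
      have heq : blockIncl r s (curveJet (r s) (a s) k t0 l) =
          scrollJet r a k s t0 u (Sum.inl l) -
            ∑ i ∈ Finset.univ.filter (fun i => i ≠ s),
              u i • blockIncl r i (curveJet (r i) (a i) k t0 l) := by
        rw [hrow]; exact (add_sub_cancel_right _ _).symm
      show blockIncl r s (curveJet (r s) (a s) k t0 l) ∈ _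
      rw [heq]
      apply Submodule.sub_mem
      · exact Submodule.subset_span ⟨Sum.inl l, rfl⟩
      · apply Submodule.sum_mem
        intro i hi
        exact Submodule.smul_mem _ _ (hik i (Finset.mem_filter.mp hi).2 l)
    · obtain ⟨_, ⟨i, rfl⟩, ⟨m, rfl⟩⟩ := hx
      exact hgen i.1 i.2 m
end

section
/- (Corollary 2.8.) Let n = 2 and fix an integer k ≥ 2. Then Φ_k(X) is empty if and only if Φ_k(C_1) and Φ_k(C_2) are both empty; precisely: rank M^{X,s}_k(t, u) = 2k + 1 for every t ∈ ℂ, every s ∈ {1,2} and every u ∈ ℂ, if and only if rank M^i_k(t) = k + 1 for every i ∈ {1,2} and every t ∈ ℂ. -/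
open Matrix

lemma rank_eq_card_iff_rows {m n' : Type*} [Fintype m] [Fintype n'] (M : Matrix m n' ℂ) :
    M.rank = Fintype.card m ↔ LinearIndependent ℂ (fun i => M i) := by
  rw [Matrix.rank_eq_finrank_span_row, linearIndependent_iff_card_eq_finrank_span,
    Set.finrank]
  exact eq_comm

lemma blockIncl_self {n : ℕ} (r : Fin n → ℕ) (i : Fin n) (v : Fin (r i + 1) → ℂ)
    (j : Fin (r i + 1)) : blockIncl r i v ⟨i, j⟩ = v j := by
  rw [blockIncl, dif_pos rfl]
  exact congrArg v (Fin.ext rfl)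

lemma blockIncl_ne {n : ℕ} (r : Fin n → ℕ) {i i' : Fin n} (h : i' ≠ i)
    (v : Fin (r i + 1) → ℂ) (j : Fin (r i' + 1)) : blockIncl r i v ⟨i', j⟩ = 0 :=
  dif_neg h

lemma scrollJet_inl_self {n : ℕ} (r : Fin n → ℕ)
    (a : ∀ i : Fin n, ℂ → Fin (r i + 1) → ℂ) (k : ℕ) (s : Fin n) (t : ℂ)
    (u : Fin n → ℂ) (l : Fin (k + 1)) (j : Fin (r s + 1)) :
    scrollJet r a k s t u (Sum.inl l) ⟨s, j⟩ = curveJet (r s) (a s) k t l j := by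
  show (blockIncl r s _ + _) ⟨s, j⟩ = _
  rw [Pi.add_apply, blockIncl_self, Finset.sum_apply]
  have : ∀ i ∈ Finset.univ.filter (fun i => i ≠ s),
      (u i • blockIncl r i (curveJet (r i) (a i) k t l)) ⟨s, j⟩ = 0 := by
    intro i hi
    rw [Pi.smul_apply, blockIncl_ne r (Ne.symm (Finset.mem_filter.mp hi).2), smul_zero]
  rw [Finset.sum_congr rfl this, Finset.sum_const_zero, add_zero]

lemma scrollJet_inl_other {n : ℕ} (r : Fin n → ℕ)
    (a : ∀ i : Fin n, ℂ → Fin (r i + 1) → ℂ) (k : ℕ) (s : Fin n) (t : ℂ)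
    (u : Fin n → ℂ) (l : Fin (k + 1)) {i₀ : Fin n} (h : i₀ ≠ s) (j : Fin (r i₀ + 1)) :
    scrollJet r a k s t u (Sum.inl l) ⟨i₀, j⟩ = u i₀ * curveJet (r i₀) (a i₀) k t l j := by
  show (blockIncl r s _ + _) ⟨i₀, j⟩ = _
  rw [Pi.add_apply, blockIncl_ne r h, Finset.sum_apply]
  rw [Finset.sum_eq_single_of_mem i₀ (by simp [h])]
  · rw [Pi.smul_apply, blockIncl_self, zero_add, smul_eq_mul]
  · intro i _ hne
    rw [Pi.smul_apply, blockIncl_ne r (Ne.symm hne), smul_zero]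

lemma scrollJet_inr_s {n : ℕ} (r : Fin n → ℕ)
    (a : ∀ i : Fin n, ℂ → Fin (r i + 1) → ℂ) (k : ℕ) (s : Fin n) (t : ℂ)
    (u : Fin n → ℂ) (q : {i : Fin n // i ≠ s} × Fin k) (j : Fin (r s + 1)) :
    scrollJet r a k s t u (Sum.inr q) ⟨s, j⟩ = 0 := by
  show blockIncl r q.1.1 _ ⟨s, j⟩ = 0
  exact blockIncl_ne r (Ne.symm q.1.2) _ _


lemma scrollJet_inr_other {n : ℕ} (r : Fin n → ℕ)
    (a : ∀ i : Fin n, ℂ → Fin (r i + 1) → ℂ) (k : ℕ) (s : Fin n) (t : ℂ)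
    (u : Fin n → ℂ) (p : {i : Fin n // i ≠ s}) (m : Fin k) (j : Fin (r p.1 + 1)) :
    scrollJet r a k s t u (Sum.inr (p, m)) ⟨p.1, j⟩ =
      curveJet (r p.1) (a p.1) k t m.castSucc j := by
  show blockIncl r p.1 _ ⟨p.1, j⟩ = _
  rw [blockIncl_self]


/-- Corollary 2.8: for a decomposable surface scroll (`n = 2`),
`Φ_k(X) = ∅` iff `Φ_k(C_1) = Φ_k(C_2) = ∅`. -/
theorem statement14 (r : Fin 2 → ℕ) (hr : ∀ i, 1 ≤ r i)
    (a : ∀ i : Fin 2, ℂ → Fin (r i + 1) → ℂ)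
    (hent : ∀ i j, Differentiable ℂ fun t => a i t j)
    (hnd : ∀ i t, (curveJet (r i) (a i) 1 t).rank = 2)
    (k : ℕ) (hk : 2 ≤ k) :
    (∀ (t : ℂ) (s : Fin 2) (u : Fin 2 → ℂ),
        (scrollJet r a k s t u).rank = 2 * k + 1) ↔
      (∀ (i : Fin 2) (t : ℂ), (curveJet (r i) (a i) k t).rank = k + 1) := by
  have hpair : ∀ s : Fin 2, ∃ i₀ : Fin 2, i₀ ≠ s ∧ ∀ i : Fin 2, i ≠ s → i = i₀ := by decide
  have card2 : ∀ s : Fin 2, Fintype.card {i : Fin 2 // i ≠ s} = 1 := by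
    intro s
    obtain ⟨i₀, hi₀, huniq⟩ := hpair s
    exact Fintype.card_eq_one_iff.mpr ⟨⟨i₀, hi₀⟩, fun q => Subtype.ext (huniq q.1 q.2)⟩
  have cardrows : ∀ s : Fin 2,
      Fintype.card (Fin (k + 1) ⊕ ({i : Fin 2 // i ≠ s} × Fin k)) = 2 * k + 1 := by
    intro s
    rw [Fintype.card_sum, Fintype.card_prod, card2 s, Fintype.card_fin, Fintype.card_fin]
    ring
  constructor
  · intro H i t
    suffices hli : LinearIndependent ℂ (fun l => curveJet (r i) (a i) k t l) by
      simpa using (rank_eq_card_iff_rows _).mpr hli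
    have HS : LinearIndependent ℂ (fun row => scrollJet r a k i t 0 row) :=
      (rank_eq_card_iff_rows _).mp (by rw [H t i 0, cardrows i])
    rw [Fintype.linearIndependent_iff] at HS ⊢
    intro g hg
    have key : ∀ row : Fin (k + 1) ⊕ ({i' : Fin 2 // i' ≠ i} × Fin k),
        Sum.elim g (fun _ => (0 : ℂ)) row = 0 := by
      apply HS
      rw [Fintype.sum_sum_type]
      simp only [Sum.elim_inl, Sum.elim_inr, zero_smul, Finset.sum_const_zero, add_zero]
      funext p
      obtain ⟨i', j⟩ := p
      rw [Finset.sum_apply, Pi.zero_apply]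
      rcases eq_or_ne i' i with rfl | hne
      · have : ∀ l : Fin (k + 1), (g l • scrollJet r a k i' t 0 (Sum.inl l)) ⟨i', j⟩
            = g l * curveJet (r i') (a i') k t l j := by
          intro l
          rw [Pi.smul_apply, scrollJet_inl_self, smul_eq_mul]
        rw [Finset.sum_congr rfl (fun l _ => this l)]
        calc (∑ l, g l * curveJet (r i') (a i') k t l j)
            = (∑ l, g l • curveJet (r i') (a i') k t l) j := by
              rw [Finset.sum_apply]; simp [smul_eq_mul]
          _ = 0 := by rw [hg]; rfl
      · have : ∀ l : Fin (k + 1), (g l • scrollJet r a k i t 0 (Sum.inl l)) ⟨i', j⟩ = 0 := by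
          intro l
          rw [Pi.smul_apply, scrollJet_inl_other r a k i t 0 l hne, Pi.zero_apply,
            zero_mul, smul_zero]
        rw [Finset.sum_congr rfl (fun l _ => this l), Finset.sum_const_zero]
    intro l
    exact key (Sum.inl l)
  · intro H t s u
    suffices hli : LinearIndependent ℂ (fun row => scrollJet r a k s t u row) by
      rw [(rank_eq_card_iff_rows _).mpr hli, cardrows s]
    have CI : ∀ i : Fin 2, LinearIndependent ℂ (fun l => curveJet (r i) (a i) k t l) :=
      fun i => (rank_eq_card_iff_rows _).mp (by rw [H i t, Fintype.card_fin])
    obtain ⟨i₀, hi₀, huniq⟩ := hpair s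
    haveI : Unique {i : Fin 2 // i ≠ s} :=
      ⟨⟨⟨i₀, hi₀⟩⟩, fun q => Subtype.ext (huniq q.1 q.2)⟩
    rw [Fintype.linearIndependent_iff]
    intro g hg
    rw [Fintype.sum_sum_type] at hg
    -- Step 1: the inl coefficients vanish
    have h1 : ∀ l : Fin (k + 1), g (Sum.inl l) = 0 := by
      have CIs := CI s
      rw [Fintype.linearIndependent_iff] at CIs
      apply CIs
      funext j
      have key := congrFun hg ⟨s, j⟩
      rw [Pi.add_apply, Pi.zero_apply, Finset.sum_apply, Finset.sum_apply] at key
      have e1 : ∀ l : Fin (k + 1),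
          (g (Sum.inl l) • scrollJet r a k s t u (Sum.inl l)) ⟨s, j⟩
            = g (Sum.inl l) * curveJet (r s) (a s) k t l j := by
        intro l; rw [Pi.smul_apply, scrollJet_inl_self, smul_eq_mul]
      have e2 : ∀ q : {i : Fin 2 // i ≠ s} × Fin k,
          (g (Sum.inr q) • scrollJet r a k s t u (Sum.inr q)) ⟨s, j⟩ = 0 := by
        intro q; rw [Pi.smul_apply, scrollJet_inr_s, smul_zero]
      rw [Finset.sum_congr rfl (fun l _ => e1 l), Finset.sum_congr rfl (fun q _ => e2 q),
        Finset.sum_const_zero, add_zero] at key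
      calc (∑ l, g (Sum.inl l) • curveJet (r s) (a s) k t l) j
          = ∑ l, g (Sum.inl l) * curveJet (r s) (a s) k t l j := by
            rw [Finset.sum_apply]; simp [smul_eq_mul]
        _ = 0 := key
    -- Step 2: the inr coefficients vanish
    have h2 : ∀ m : Fin k, g (Sum.inr (⟨i₀, hi₀⟩, m)) = 0 := by
      have CIc := (CI i₀).comp Fin.castSucc (Fin.castSucc_injective k)
      rw [Fintype.linearIndependent_iff] at CIc
      apply CIc
      funext j
      have key := congrFun hg ⟨i₀, j⟩
      rw [Pi.add_apply, Pi.zero_apply, Finset.sum_apply, Finset.sum_apply] at key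
      have e1 : ∀ l : Fin (k + 1),
          (g (Sum.inl l) • scrollJet r a k s t u (Sum.inl l)) ⟨i₀, j⟩ = 0 := by
        intro l
        rw [Pi.smul_apply, scrollJet_inl_other r a k s t u l hi₀, h1 l, zero_smul]
      rw [Finset.sum_congr rfl (fun l _ => e1 l), Finset.sum_const_zero, zero_add] at key
      rw [Fintype.sum_prod_type, Fintype.sum_unique] at key
      have e2 : ∀ m : Fin k,
          (g (Sum.inr ((default : {i : Fin 2 // i ≠ s}), m)) •
            scrollJet r a k s t u (Sum.inr (default, m))) ⟨i₀, j⟩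
          = g (Sum.inr (⟨i₀, hi₀⟩, m)) * curveJet (r i₀) (a i₀) k t m.castSucc j := by
        intro m
        have hdef : (default : {i : Fin 2 // i ≠ s}) = ⟨i₀, hi₀⟩ :=
          Subtype.ext (huniq _ (default : {i : Fin 2 // i ≠ s}).2)
        rw [hdef, Pi.smul_apply, smul_eq_mul]
        exact congrArg (g (Sum.inr (⟨i₀, hi₀⟩, m)) * ·)
          (scrollJet_inr_other r a k s t u ⟨i₀, hi₀⟩ m j)
      rw [Finset.sum_congr rfl (fun m _ => e2 m)] at key
      calc (∑ m, g (Sum.inr (⟨i₀, hi₀⟩, m)) •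
              ((fun l => curveJet (r i₀) (a i₀) k t l) ∘ Fin.castSucc) m) j
          = ∑ m, g (Sum.inr (⟨i₀, hi₀⟩, m)) * curveJet (r i₀) (a i₀) k t m.castSucc j := by
            rw [Finset.sum_apply]; simp [smul_eq_mul, Function.comp]
        _ = 0 := key
    rintro (l | ⟨q1, m⟩)
    · exact h1 l
    · rw [show q1 = ⟨i₀, hi₀⟩ from Subtype.ext (huniq q1.1 q1.2)]
      exact h2 m
end
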